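/- Let φ(y₁,y₂) := max(e^{−y₁} + y₂, y₂²) + (1/2)(y₂ − 2)² for (y₁,y₂) ∈ ℝ². Then inf_{(y₁,y₂) ∈ ℝ²} φ(y₁,y₂) = 3/2, yet φ(y₁,y₂) > 3/2 for every (y₁,y₂) ∈ ℝ²; hence the infimum is finite but not attained, so the first ADMM subproblem for the concrete problem (with σ = 1 and initial point x⁰ = 0, z⁰ = 0) has no solution. -/

import Mathlib

/-- The objective of the first ADMM subproblem for the concrete problem with `σ = 1`,
`x⁰ = 0`, `z⁰ = 0`:  `φ(y₁, y₂) = max(e^{-y₁} + y₂, y₂²) + (y₂ - 2)²/2`. -/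
noncomputable def phiCon (y₁ y₂ : ℝ) : ℝ :=
  max (Real.exp (-y₁) + y₂) (y₂ ^ 2) + (y₂ - 2) ^ 2 / 2

lemma phiCon_gt (y₁ y₂ : ℝ) : 3 / 2 < phiCon y₁ y₂ := by
  have h1 : Real.exp (-y₁) + y₂ ≤ max (Real.exp (-y₁) + y₂) (y₂ ^ 2) := le_max_left _ _
  have h2 : 0 < Real.exp (-y₁) := Real.exp_pos _
  have h3 : (0:ℝ) ≤ (y₂ - 1) ^ 2 := sq_nonneg _
  unfold phiCon
  nlinarith

lemma phiCon_at_one (y₁ : ℝ) : phiCon y₁ 1 = Real.exp (-y₁) + 3 / 2 := by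
  have h2 : 0 < Real.exp (-y₁) := Real.exp_pos _
  unfold phiCon
  rw [max_eq_left (by nlinarith)]
  ring

/-- **The first ADMM subproblem has no solution.**  The infimum of `φ` over `ℝ²` equals
`3/2`, yet `φ(y₁, y₂) > 3/2` everywhere; hence the infimum is finite but not attained and
the first ADMM subproblem has no solution. -/
theorem stmt_12 :
    (⨅ p : ℝ × ℝ, ((phiCon p.1 p.2 : ℝ) : EReal)) = ((3 / 2 : ℝ) : EReal) ∧
    (∀ y₁ y₂ : ℝ, 3 / 2 < phiCon y₁ y₂) ∧
    ¬∃ p : ℝ × ℝ, ∀ q : ℝ × ℝ, phiCon p.1 p.2 ≤ phiCon q.1 q.2 := by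
  refine ⟨?_, phiCon_gt, ?_⟩
  · apply le_antisymm
    · refine le_of_forall_gt_imp_ge_of_dense fun c hc => ?_
      induction c using EReal.rec with
      | bot => exact absurd hc (by simp [← EReal.coe_neg])
      | top => exact le_top
      | coe c =>
        rw [EReal.coe_lt_coe_iff] at hc
        have hε : (0:ℝ) < c - 3/2 := by linarith
        calc (⨅ p : ℝ × ℝ, ((phiCon p.1 p.2 : ℝ) : EReal))
            ≤ ((phiCon (-Real.log (c - 3/2)) 1 : ℝ) : EReal) :=
              iInf_le _ ((-Real.log (c - 3/2), 1) : ℝ × ℝ)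
          _ ≤ (c : EReal) := by
              rw [EReal.coe_le_coe_iff, phiCon_at_one, neg_neg, Real.exp_log hε]
              linarith
    · exact le_iInf fun p => EReal.coe_le_coe_iff.mpr (phiCon_gt p.1 p.2).le
  · rintro ⟨p, hp⟩
    have h := phiCon_gt p.1 p.2
    have hε : (0:ℝ) < phiCon p.1 p.2 - 3/2 := by linarith
    have key := hp ((-Real.log (phiCon p.1 p.2 - 3/2) + 1), 1)
    simp only [phiCon_at_one] at key
    have heq : Real.exp (-(-Real.log (phiCon p.1 p.2 - 3/2) + 1))
        = (phiCon p.1 p.2 - 3/2) * Real.exp (-1) := by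
      rw [neg_add, neg_neg, Real.exp_add, Real.exp_log hε]
    rw [heq] at key
    have he : Real.exp (-1) < 1 := Real.exp_lt_one_iff.mpr (by norm_num)
    have he0 : 0 < Real.exp (-1) := Real.exp_pos _
    nlinarith
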